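/- Intervention sub-optimality with TV loss: Let π be a policy such that E_{s∼β}[D_TV(π(·|s), π*(·|s))] ≤ ε_b, where β is the distribution over intervened states. Then J(π*) − J(π) ≤ pH + δ ε_b H², where δ = E_{s∼d^{π'}}[I(Q_h^{π*}(s,π*) − Q_h^{π*}(s,π) > p)]. -/

import Mathlib

open Finset

noncomputable section

attribute [local instance] Classical.propDecidable

variable {S A : Type*}

/-- `p` is a probability distribution on a finite type. -/
def IsDist {X : Type*} [Fintype X] (p : X → ℝ) : Prop :=
  (∀ x, 0 ≤ p x) ∧ ∑ x, p x = 1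

/-- A (stochastic) policy: a distribution over actions at each state. -/
def IsPolicy [Fintype A] (π : S → A → ℝ) : Prop := ∀ s, IsDist (π s)

/-- A transition kernel. -/
def IsKernel [Fintype S] (P : S → A → S → ℝ) : Prop := ∀ s a, IsDist (P s a)

/-- Total variation distance on a finite type. -/
def tvDist {X : Type*} [Fintype X] (p q : X → ℝ) : ℝ := (1/2) * ∑ x, |p x - q x|

variable [Fintype S] [Fintype A]

/-- Q-value for a (possibly nonstationary) policy `πt` (indexed by time step):
`Qn P r πt k t s a` is the expected reward-to-go with `k` steps remaining, at current time
step `t`, taking action `a` in state `s` and thereafter following `πt`. -/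
def Qn (P : S → A → S → ℝ) (r : S → A → ℝ) (πt : ℕ → S → A → ℝ) :
    ℕ → ℕ → S → A → ℝ
  | 0, _ => fun _ _ => 0
  | k+1, t => fun s a =>
      r s a + ∑ s', P s a s' * ∑ a', πt (t+1) s' a' * Qn P r πt k (t+1) s' a'

/-- Expected Q-value when the first action is drawn from `π''`. -/
def QEn (P : S → A → S → ℝ) (r : S → A → ℝ) (πt : ℕ → S → A → ℝ)
    (k t : ℕ) (s : S) (π'' : S → A → ℝ) : ℝ :=
  ∑ a, π'' s a * Qn P r πt k t s a

/-- State distribution at (0-indexed) step `h` when following `πt` from initial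
distribution `ρ`. -/
def stateDistN (P : S → A → S → ℝ) (ρ : S → ℝ) (πt : ℕ → S → A → ℝ) : ℕ → S → ℝ
  | 0 => ρ
  | h+1 => fun s' => ∑ s, ∑ a, stateDistN P ρ πt h s * πt h s a * P s a s'

/-- Policy value: expected cumulative reward over horizon `H`. -/
def Jn (P : S → A → S → ℝ) (r : S → A → ℝ) (ρ : S → ℝ) (H : ℕ)
    (πt : ℕ → S → A → ℝ) : ℝ :=
  ∑ s, ρ s * QEn P r πt H 0 s (πt 0)

/-- Stationary-policy Q-value with `k` steps remaining. -/
def Qst (P : S → A → S → ℝ) (r : S → A → ℝ) (π : S → A → ℝ) (k : ℕ) :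
    S → A → ℝ := Qn P r (fun _ => π) k 0

/-- Stationary expected Q-value, first action drawn from `π''`. -/
def QE (P : S → A → S → ℝ) (r : S → A → ℝ) (π : S → A → ℝ) (k : ℕ) (s : S)
    (π'' : S → A → ℝ) : ℝ := ∑ a, π'' s a * Qst P r π k s a

/-- State distribution at (0-indexed) step `h` under a stationary policy. -/
def stateDist (P : S → A → S → ℝ) (ρ : S → ℝ) (π : S → A → ℝ) : ℕ → S → ℝ :=
  stateDistN P ρ (fun _ => π)

/-- Policy value of a stationary policy. -/
def J (P : S → A → S → ℝ) (r : S → A → ℝ) (ρ : S → ℝ) (H : ℕ)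
    (π : S → A → ℝ) : ℝ := Jn P r ρ H (fun _ => π)

/-! ### Auxiliary lemmas -/

section Aux

variable (P : S → A → S → ℝ) (r : S → A → ℝ)

lemma expSum_le {X : Type*} [Fintype X] {w f : X → ℝ} (hw : IsDist w) {M : ℝ}
    (hf : ∀ x, f x ≤ M) : ∑ x, w x * f x ≤ M := by
  calc ∑ x, w x * f x ≤ ∑ x, w x * M :=
        Finset.sum_le_sum fun x _ => mul_le_mul_of_nonneg_left (hf x) (hw.1 x)
    _ = M := by rw [← Finset.sum_mul, hw.2, one_mul]

lemma le_expSum {X : Type*} [Fintype X] {w f : X → ℝ} (hw : IsDist w) {m : ℝ}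
    (hf : ∀ x, m ≤ f x) : m ≤ ∑ x, w x * f x := by
  calc m = ∑ x, w x * m := by rw [← Finset.sum_mul, hw.2, one_mul]
    _ ≤ ∑ x, w x * f x :=
        Finset.sum_le_sum fun x _ => mul_le_mul_of_nonneg_left (hf x) (hw.1 x)

lemma expSum_nonneg {X : Type*} [Fintype X] {w f : X → ℝ} (hw : ∀ x, 0 ≤ w x)
    (hf : ∀ x, 0 ≤ f x) : 0 ≤ ∑ x, w x * f x :=
  Finset.sum_nonneg fun x _ => mul_nonneg (hw x) (hf x)

lemma tvDist_nonneg {X : Type*} [Fintype X] (p q : X → ℝ) : 0 ≤ tvDist p q := by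
  unfold tvDist
  have : 0 ≤ ∑ x, |p x - q x| := Finset.sum_nonneg fun x _ => abs_nonneg _
  linarith

lemma tvDist_comm {X : Type*} [Fintype X] (p q : X → ℝ) : tvDist p q = tvDist q p := by
  unfold tvDist
  congr 1
  exact Finset.sum_congr rfl fun x _ => abs_sub_comm _ _

/-- Bounding a difference of expectations by the TV distance. -/
lemma sum_sub_mul_le_tv {p q f : A → ℝ} (hpq : ∑ a, p a = ∑ a, q a) {M : ℝ}
    (hM : 0 ≤ M) (hf : ∀ a, 0 ≤ f a ∧ f a ≤ M) :
    ∑ a, (p a - q a) * f a ≤ M * tvDist p q := by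
  have hzero : ∑ a, (p a - q a) * (M / 2) = 0 := by
    rw [← Finset.sum_mul]
    simp [Finset.sum_sub_distrib, hpq]
  have h0 : ∑ a, (p a - q a) * f a = ∑ a, (p a - q a) * (f a - M / 2) := by
    have : ∑ a, (p a - q a) * f a
        = ∑ a, ((p a - q a) * (f a - M / 2) + (p a - q a) * (M / 2)) := by
      refine Finset.sum_congr rfl fun a _ => by ring
    rw [this, Finset.sum_add_distrib, hzero, add_zero]
  rw [h0]
  have hle : ∀ a, (p a - q a) * (f a - M / 2) ≤ |p a - q a| * (M / 2) := by
    intro a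
    calc (p a - q a) * (f a - M / 2) ≤ |(p a - q a) * (f a - M / 2)| := le_abs_self _
      _ = |p a - q a| * |f a - M / 2| := abs_mul _ _
      _ ≤ |p a - q a| * (M / 2) := by
          refine mul_le_mul_of_nonneg_left ?_ (abs_nonneg _)
          rw [abs_le]
          constructor <;> [linarith [(hf a).1]; linarith [(hf a).2]]
  calc ∑ a, (p a - q a) * (f a - M / 2) ≤ ∑ a, |p a - q a| * (M / 2) :=
        Finset.sum_le_sum fun a _ => hle a
    _ = M * tvDist p q := by rw [← Finset.sum_mul, tvDist]; ring

lemma Qn_bounds (hP : IsKernel P) (hr : ∀ s a, 0 ≤ r s a ∧ r s a ≤ 1)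
    (μ : ℕ → S → A → ℝ) (hμ : ∀ t, IsPolicy (μ t)) :
    ∀ k t s a, 0 ≤ Qn P r μ k t s a ∧ Qn P r μ k t s a ≤ k := by
  intro k
  induction k with
  | zero => intro t s a; simp [Qn]
  | succ k ih =>
    intro t s a
    have hV : ∀ s', 0 ≤ (∑ a', μ (t+1) s' a' * Qn P r μ k (t+1) s' a') ∧
        (∑ a', μ (t+1) s' a' * Qn P r μ k (t+1) s' a') ≤ (k : ℝ) := fun s' =>
      ⟨expSum_nonneg (fun a' => (hμ (t+1) s').1 a') (fun a' => (ih (t+1) s' a').1),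
       expSum_le (hμ (t+1) s') (fun a' => (ih (t+1) s' a').2)⟩
    have h0 : 0 ≤ ∑ s', P s a s' * ∑ a', μ (t+1) s' a' * Qn P r μ k (t+1) s' a' :=
      expSum_nonneg (fun s' => (hP s a).1 s') (fun s' => (hV s').1)
    have h1 : (∑ s', P s a s' * ∑ a', μ (t+1) s' a' * Qn P r μ k (t+1) s' a') ≤ (k : ℝ) :=
      expSum_le (hP s a) (fun s' => (hV s').2)
    have hr1 := (hr s a).1
    have hr2 := (hr s a).2
    constructor
    · show 0 ≤ r s a + ∑ s', P s a s' * ∑ a', μ (t+1) s' a' * Qn P r μ k (t+1) s' a'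
      linarith
    · show r s a + (∑ s', P s a s' * ∑ a', μ (t+1) s' a' * Qn P r μ k (t+1) s' a')
          ≤ ((k + 1 : ℕ) : ℝ)
      push_cast
      linarith

lemma Qn_const (ν : S → A → ℝ) : ∀ k t, Qn P r (fun _ => ν) k t = Qst P r ν k := by
  intro k
  induction k with
  | zero => intro t; rfl
  | succ k ih =>
    intro t
    funext s a
    show r s a + ∑ s', P s a s' * ∑ a', ν s' a' * Qn P r (fun _ => ν) k (t+1) s' a'
        = r s a + ∑ s', P s a s' * ∑ a', ν s' a' * Qn P r (fun _ => ν) k (0+1) s' a'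
    rw [ih (t+1), ih (0+1)]

/-- Push-forward of a state distribution one step. -/
def push (μ : ℕ → S → A → ℝ) (t : ℕ) (ρ' : S → ℝ) : S → ℝ :=
  fun s' => ∑ s, ∑ a, ρ' s * μ t s a * P s a s'

/-- Distribution after `j` steps starting at time `t` from `ρ'`. -/
def distFrom (μ : ℕ → S → A → ℝ) (t : ℕ) (ρ' : S → ℝ) : ℕ → S → ℝ
  | 0 => ρ'
  | j+1 => push P μ (t+j) (distFrom μ t ρ' j)

lemma distFrom_shift (μ : ℕ → S → A → ℝ) :
    ∀ j t (ρ' : S → ℝ), distFrom P μ t ρ' (j+1) = distFrom P μ (t+1) (push P μ t ρ') j := by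
  intro j
  induction j with
  | zero => intro t ρ'; rfl
  | succ j ih =>
    intro t ρ'
    show push P μ (t+(j+1)) (distFrom P μ t ρ' (j+1)) = _
    rw [ih t ρ']
    show push P μ (t+(j+1)) (distFrom P μ (t+1) (push P μ t ρ') j)
        = push P μ ((t+1)+j) (distFrom P μ (t+1) (push P μ t ρ') j)
    rw [show t+(j+1) = (t+1)+j by omega]

lemma stateDistN_eq_distFrom (ρ : S → ℝ) (μ : ℕ → S → A → ℝ) :
    ∀ h, stateDistN P ρ μ h = distFrom P μ 0 ρ h := by
  intro h
  induction h with
  | zero => rfl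
  | succ h ih =>
    show (fun s' => ∑ s, ∑ a, stateDistN P ρ μ h s * μ h s a * P s a s')
        = push P μ (0+h) (distFrom P μ 0 ρ h)
    rw [← ih, show 0+h = h by omega]
    rfl

lemma Qn_sub_Qst (μ : ℕ → S → A → ℝ) (ν : S → A → ℝ) (k t : ℕ) (s : S) (a : A) :
    Qn P r μ (k+1) t s a - Qst P r ν (k+1) s a
    = ∑ s', P s a s' * ((∑ a', μ (t+1) s' a' * Qn P r μ k (t+1) s' a')
        - QE P r ν k s' ν) := by
  have h1 : Qn P r μ (k+1) t s a
      = r s a + ∑ s', P s a s' * ∑ a', μ (t+1) s' a' * Qn P r μ k (t+1) s' a' := rfl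
  have h2 : Qst P r ν (k+1) s a
      = r s a + ∑ s', P s a s' * QE P r ν k s' ν := by
    show r s a + ∑ s', P s a s' * ∑ a', ν s' a' * Qn P r (fun _ => ν) k (0+1) s' a' = _
    rw [Qn_const P r ν k (0+1)]
    rfl
  rw [h1, h2]
  rw [show ∀ x y z : ℝ, (x + y) - (x + z) = y - z from fun x y z => by ring,
    ← Finset.sum_sub_distrib]
  exact Finset.sum_congr rfl fun s' _ => by ring

lemma pdl_step (μ : ℕ → S → A → ℝ) (ν : S → A → ℝ) (k t : ℕ) (ρ' : S → ℝ) :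
    ∑ s, ρ' s * ((∑ a, μ t s a * Qn P r μ (k+1) t s a) - QE P r ν (k+1) s ν)
    = ∑ s, ρ' s * (QE P r ν (k+1) s (μ t) - QE P r ν (k+1) s ν)
      + ∑ s', push P μ t ρ' s' *
          ((∑ a, μ (t+1) s' a * Qn P r μ k (t+1) s' a) - QE P r ν k s' ν) := by
  have key : ∀ s, (∑ a, μ t s a * Qn P r μ (k+1) t s a) - QE P r ν (k+1) s (μ t)
      = ∑ a, μ t s a * ∑ s', P s a s' *
          ((∑ a', μ (t+1) s' a' * Qn P r μ k (t+1) s' a') - QE P r ν k s' ν) := by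
    intro s
    have : ∀ a, μ t s a * ∑ s', P s a s' *
        ((∑ a', μ (t+1) s' a' * Qn P r μ k (t+1) s' a') - QE P r ν k s' ν)
        = μ t s a * Qn P r μ (k+1) t s a - μ t s a * Qst P r ν (k+1) s a := by
      intro a
      rw [← Qn_sub_Qst P r μ ν k t s a]
      ring
    rw [Finset.sum_congr rfl fun a _ => this a, Finset.sum_sub_distrib]
    rfl
  have swap : ∑ s', push P μ t ρ' s' *
        ((∑ a, μ (t+1) s' a * Qn P r μ k (t+1) s' a) - QE P r ν k s' ν)
      = ∑ s, ρ' s * ∑ a, μ t s a * ∑ s', P s a s' *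
          ((∑ a', μ (t+1) s' a' * Qn P r μ k (t+1) s' a') - QE P r ν k s' ν) := by
    simp only [push, Finset.sum_mul, Finset.mul_sum]
    rw [Finset.sum_comm]
    refine Finset.sum_congr rfl fun s _ => ?_
    rw [Finset.sum_comm]
    refine Finset.sum_congr rfl fun a _ => ?_
    refine Finset.sum_congr rfl fun s' _ => ?_
    ring
  rw [swap]
  rw [← Finset.sum_add_distrib]
  refine Finset.sum_congr rfl fun s _ => ?_
  rw [← mul_add]
  congr 1
  rw [← key s]
  ring

/-- Performance-difference identity. -/
lemma pdl (μ : ℕ → S → A → ℝ) (ν : S → A → ℝ) :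
    ∀ k t (ρ' : S → ℝ),
    ∑ s, ρ' s * ((∑ a, μ t s a * Qn P r μ k t s a) - QE P r ν k s ν)
    = ∑ j ∈ Finset.range k, ∑ s, distFrom P μ t ρ' j s *
        (QE P r ν (k-j) s (μ (t+j)) - QE P r ν (k-j) s ν) := by
  intro k
  induction k with
  | zero => intro t ρ'; simp [Qn, QE, Qst]
  | succ k ih =>
    intro t ρ'
    rw [pdl_step P r μ ν k t ρ', ih (t+1) (push P μ t ρ'), Finset.sum_range_succ']
    have e1 : ∑ j ∈ Finset.range k, ∑ s, distFrom P μ (t+1) (push P μ t ρ') j s *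
          (QE P r ν (k-j) s (μ (t+1+j)) - QE P r ν (k-j) s ν)
        = ∑ j ∈ Finset.range k, ∑ s, distFrom P μ t ρ' (j+1) s *
          (QE P r ν (k+1-(j+1)) s (μ (t+(j+1))) - QE P r ν (k+1-(j+1)) s ν) := by
      refine Finset.sum_congr rfl fun j hj => ?_
      rw [← distFrom_shift P μ j t ρ', show t+1+j = t+(j+1) by omega,
        show k+1-(j+1) = k - j from by omega]
    have e0 : ∑ s, ρ' s * (QE P r ν (k+1) s (μ t) - QE P r ν (k+1) s ν)
        = ∑ s, distFrom P μ t ρ' 0 s *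
          (QE P r ν (k+1-0) s (μ (t+0)) - QE P r ν (k+1-0) s ν) := rfl
    rw [e1, e0]
    exact add_comm _ _

lemma Jn_sub (ρ : S → ℝ) (H : ℕ) (μ : ℕ → S → A → ℝ) (ν : S → A → ℝ) :
    Jn P r ρ H μ - J P r ρ H ν
    = ∑ h ∈ Finset.range H, ∑ s, stateDistN P ρ μ h s *
        (QE P r ν (H-h) s (μ h) - QE P r ν (H-h) s ν) := by
  have hJν : J P r ρ H ν = ∑ s, ρ s * QE P r ν H s ν := rfl
  have hJμ : Jn P r ρ H μ = ∑ s, ρ s * ∑ a, μ 0 s a * Qn P r μ H 0 s a := rfl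
  rw [hJν, hJμ, ← Finset.sum_sub_distrib]
  have : ∀ s, ρ s * (∑ a, μ 0 s a * Qn P r μ H 0 s a) - ρ s * QE P r ν H s ν
      = ρ s * ((∑ a, μ 0 s a * Qn P r μ H 0 s a) - QE P r ν H s ν) := fun s => by ring
  rw [Finset.sum_congr rfl fun s _ => this s, pdl P r μ ν H 0 ρ]
  refine Finset.sum_congr rfl fun h hh => ?_
  rw [stateDistN_eq_distFrom P ρ μ h, show 0+h = h by omega]

lemma stateDistN_isDist (ρ : S → ℝ) (hP : IsKernel P) (hρ : IsDist ρ)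
    (μ : ℕ → S → A → ℝ) (hμ : ∀ t, IsPolicy (μ t)) :
    ∀ h, IsDist (stateDistN P ρ μ h) := by
  intro h
  induction h with
  | zero => exact hρ
  | succ h ih =>
    constructor
    · intro s'
      refine Finset.sum_nonneg fun s _ => Finset.sum_nonneg fun a _ => ?_
      exact mul_nonneg (mul_nonneg (ih.1 s) ((hμ h s).1 a)) ((hP s a).1 s')
    · show ∑ s', ∑ s, ∑ a, stateDistN P ρ μ h s * μ h s a * P s a s' = 1
      calc ∑ s', ∑ s, ∑ a, stateDistN P ρ μ h s * μ h s a * P s a s'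
          = ∑ s, ∑ a, ∑ s', stateDistN P ρ μ h s * μ h s a * P s a s' := by
            rw [Finset.sum_comm]
            exact Finset.sum_congr rfl fun s _ => Finset.sum_comm
        _ = ∑ s, ∑ a, stateDistN P ρ μ h s * μ h s a := by
            refine Finset.sum_congr rfl fun s _ => Finset.sum_congr rfl fun a _ => ?_
            rw [← Finset.mul_sum, (hP s a).2, mul_one]
        _ = ∑ s, stateDistN P ρ μ h s := by
            refine Finset.sum_congr rfl fun s _ => ?_
            rw [← Finset.mul_sum, (hμ h s).2, mul_one]
        _ = 1 := ih.2

end Aux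

/-- Intervention sub-optimality bound with TV-distance loss:
if `E_{s∼β}[D_TV(π(·|s),π*(·|s))] ≤ ε_b` then `J(π*) − J(π) ≤ pH + δ ε_b H²`. -/
theorem intervention_suboptimality_tv
    (P : S → A → S → ℝ) (r : S → A → ℝ) (ρ : S → ℝ) (H : ℕ)
    (hP : IsKernel P) (hρ : IsDist ρ) (hr : ∀ s a, 0 ≤ r s a ∧ r s a ≤ 1)
    (πstar π : S → A → ℝ) (hstar : IsPolicy πstar) (hπ : IsPolicy π)
    (p εb : ℝ) (hp : 0 ≤ p) (hεb : 0 ≤ εb)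
    (π' : ℕ → S → A → ℝ)
    (hπ' : ∀ h s, π' h s =
      if p < QE P r πstar (H - h) s πstar - QE P r πstar (H - h) s π
      then πstar s else π s)
    (δ : ℝ)
    (hδ : δ = (1 / (H : ℝ)) * ∑ h ∈ Finset.range H, ∑ s, stateDistN P ρ π' h s *
      (if p < QE P r πstar (H - h) s πstar - QE P r πstar (H - h) s π then 1 else 0))
    (β : S → ℝ)
    (hβ : ∀ s, β s = (1 / ((H : ℝ) * δ)) * ∑ h ∈ Finset.range H,
      (if π' h s ≠ π s then 1 else 0) * stateDistN P ρ π' h s)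
    (hloss : ∑ s, β s * tvDist (π s) (πstar s) ≤ εb) :
    J P r ρ H πstar - J P r ρ H π ≤ p * H + δ * εb * (H : ℝ)^2 := by
  have hπ'pol : ∀ h, IsPolicy (π' h) := by
    intro h s
    rw [hπ' h s]
    split
    · exact hstar s
    · exact hπ s
  have hd := stateDistN_isDist P ρ hP hρ π' hπ'pol
  have hQπ := Qn_bounds P r hP hr (fun _ => π) (fun _ => hπ)
  have e1 := Jn_sub P r ρ H π' πstar
  have e2 := Jn_sub P r ρ H π' π
  -- Bound 1 : the value loss versus the optimal policy is at most p per step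
  have b1 : -(p * H) ≤ ∑ h ∈ Finset.range H, ∑ s, stateDistN P ρ π' h s *
      (QE P r πstar (H-h) s (π' h) - QE P r πstar (H-h) s πstar) := by
    have hstep : ∀ h ∈ Finset.range H, -p ≤ ∑ s, stateDistN P ρ π' h s *
        (QE P r πstar (H-h) s (π' h) - QE P r πstar (H-h) s πstar) := by
      intro h _
      refine le_expSum (hd h) fun s => ?_
      by_cases hc : p < QE P r πstar (H-h) s πstar - QE P r πstar (H-h) s π
      · have hps : π' h s = πstar s := by rw [hπ' h s, if_pos hc]
        have hq : QE P r πstar (H-h) s (π' h) = QE P r πstar (H-h) s πstar := by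
          unfold QE; rw [hps]
        rw [hq]; linarith
      · have hps : π' h s = π s := by rw [hπ' h s, if_neg hc]
        have hq : QE P r πstar (H-h) s (π' h) = QE P r πstar (H-h) s π := by
          unfold QE; rw [hps]
        rw [hq]; push_neg at hc; linarith
    calc -(p * H) = ∑ _h ∈ Finset.range H, -p := by
          rw [Finset.sum_const, Finset.card_range, nsmul_eq_mul]; ring
      _ ≤ _ := Finset.sum_le_sum hstep
  -- δ is nonnegative
  have hδnonneg : 0 ≤ δ := by
    rw [hδ]
    refine mul_nonneg (by positivity) (Finset.sum_nonneg fun h _ =>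
      Finset.sum_nonneg fun s _ => mul_nonneg ((hd h).1 s) ?_)
    split <;> norm_num
  -- Bound 2 : the value gain over π
  have b2 : (∑ h ∈ Finset.range H, ∑ s, stateDistN P ρ π' h s *
      (QE P r π (H-h) s (π' h) - QE P r π (H-h) s π)) ≤ δ * εb * (H : ℝ)^2 := by
    by_cases hδ0 : δ = 0
    · rw [hδ0]
      simp only [zero_mul]
      by_cases hH : H = 0
      · subst hH; simp
      · have hHne : (H : ℝ) ≠ 0 := Nat.cast_ne_zero.mpr hH
        have hT : ∑ h ∈ Finset.range H, ∑ s, stateDistN P ρ π' h s *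
            (if p < QE P r πstar (H - h) s πstar - QE P r πstar (H - h) s π
              then (1:ℝ) else 0) = 0 := by
          have h0 := hδ
          rw [hδ0] at h0
          field_simp at h0
          simp only [mul_ite, mul_one, mul_zero, zero_mul] at h0 ⊢
          linarith [h0]
        have hnn : ∀ h ∈ Finset.range H, (0:ℝ) ≤ ∑ s, stateDistN P ρ π' h s *
            (if p < QE P r πstar (H - h) s πstar - QE P r πstar (H - h) s π
              then (1:ℝ) else 0) := by
          intro h _
          refine Finset.sum_nonneg fun s _ => mul_nonneg ((hd h).1 s) ?_
          split <;> norm_num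
        have hinner := (Finset.sum_eq_zero_iff_of_nonneg hnn).mp hT
        refine Finset.sum_nonpos fun h hh => Finset.sum_nonpos fun s _ => ?_
        by_cases hc : p < QE P r πstar (H-h) s πstar - QE P r πstar (H-h) s π
        · have hzero : stateDistN P ρ π' h s = 0 := by
            have h2 := hinner h hh
            have hnn2 : ∀ s ∈ (Finset.univ : Finset S), (0:ℝ) ≤ stateDistN P ρ π' h s *
                (if p < QE P r πstar (H - h) s πstar - QE P r πstar (H - h) s π
                  then (1:ℝ) else 0) := fun s _ => by
              refine mul_nonneg ((hd h).1 s) ?_; split <;> norm_num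
            have h3 := (Finset.sum_eq_zero_iff_of_nonneg hnn2).mp h2 s (Finset.mem_univ s)
            rw [if_pos hc, mul_one] at h3
            exact h3
          rw [hzero, zero_mul]
        · have hps : π' h s = π s := by rw [hπ' h s, if_neg hc]
          have hq : QE P r π (H-h) s (π' h) = QE P r π (H-h) s π := by
            unfold QE; rw [hps]
          rw [hq, sub_self, mul_zero]
    · -- δ ≠ 0, hence H ≠ 0
      have hH : H ≠ 0 := by
        intro h0
        subst h0
        simp at hδ
        exact hδ0 hδ
      have hHne : (H : ℝ) ≠ 0 := Nat.cast_ne_zero.mpr hH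
      have hHδne : (H : ℝ) * δ ≠ 0 := mul_ne_zero hHne hδ0
      have hβinner : ∀ s, ∑ h ∈ Finset.range H,
          (if π' h s ≠ π s then (1:ℝ) else 0) * stateDistN P ρ π' h s
          = (H : ℝ) * δ * β s := by
        intro s
        rw [hβ s]
        field_simp
      have hterm : ∀ h ∈ Finset.range H, ∀ s, stateDistN P ρ π' h s *
          (QE P r π (H-h) s (π' h) - QE P r π (H-h) s π)
          ≤ ((if π' h s ≠ π s then (1:ℝ) else 0) * stateDistN P ρ π' h s) *
            ((H : ℝ) * tvDist (π s) (πstar s)) := by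
        intro h _ s
        by_cases hne : π' h s = π s
        · have hq : QE P r π (H-h) s (π' h) = QE P r π (H-h) s π := by
            unfold QE; rw [hne]
          rw [hq, sub_self, mul_zero, if_neg (by simpa using hne), zero_mul, zero_mul]
        · have hc : p < QE P r πstar (H-h) s πstar - QE P r πstar (H-h) s π := by
            by_contra hc
            exact hne (by rw [hπ' h s, if_neg hc])
          have hps : π' h s = πstar s := by rw [hπ' h s, if_pos hc]
          have hdiff : QE P r π (H-h) s (π' h) - QE P r π (H-h) s π
              = ∑ a, (πstar s a - π s a) * Qst P r π (H-h) s a := by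
            unfold QE
            rw [hps, ← Finset.sum_sub_distrib]
            exact Finset.sum_congr rfl fun a _ => by ring
          have hQst : ∀ a, 0 ≤ Qst P r π (H-h) s a ∧
              Qst P r π (H-h) s a ≤ ((H-h : ℕ) : ℝ) := fun a => hQπ (H-h) 0 s a
          have htv : ∑ a, (πstar s a - π s a) * Qst P r π (H-h) s a
              ≤ ((H-h : ℕ) : ℝ) * tvDist (πstar s) (π s) :=
            sum_sub_mul_le_tv (by rw [(hstar s).2, (hπ s).2]) (by positivity) hQst
          have hbd : QE P r π (H-h) s (π' h) - QE P r π (H-h) s π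
              ≤ (H : ℝ) * tvDist (π s) (πstar s) := by
            rw [hdiff]
            refine le_trans htv ?_
            rw [tvDist_comm]
            refine mul_le_mul_of_nonneg_right ?_ (tvDist_nonneg _ _)
            exact_mod_cast Nat.sub_le H h
          rw [if_pos hne]
          calc stateDistN P ρ π' h s * (QE P r π (H-h) s (π' h) - QE P r π (H-h) s π)
              ≤ stateDistN P ρ π' h s * ((H : ℝ) * tvDist (π s) (πstar s)) :=
                mul_le_mul_of_nonneg_left hbd ((hd h).1 s)
            _ = (1 * stateDistN P ρ π' h s) * ((H : ℝ) * tvDist (π s) (πstar s)) := by ring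
      calc ∑ h ∈ Finset.range H, ∑ s, stateDistN P ρ π' h s *
            (QE P r π (H-h) s (π' h) - QE P r π (H-h) s π)
          ≤ ∑ h ∈ Finset.range H, ∑ s,
              ((if π' h s ≠ π s then (1:ℝ) else 0) * stateDistN P ρ π' h s) *
              ((H : ℝ) * tvDist (π s) (πstar s)) :=
            Finset.sum_le_sum fun h hh => Finset.sum_le_sum fun s _ => hterm h hh s
        _ = ∑ s, (∑ h ∈ Finset.range H,
              (if π' h s ≠ π s then (1:ℝ) else 0) * stateDistN P ρ π' h s) *
              ((H : ℝ) * tvDist (π s) (πstar s)) := by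
            rw [Finset.sum_comm]
            exact Finset.sum_congr rfl fun s _ => (Finset.sum_mul _ _ _).symm
        _ = ∑ s, ((H : ℝ) * δ * β s) * ((H : ℝ) * tvDist (π s) (πstar s)) := by
            exact Finset.sum_congr rfl fun s _ => by rw [hβinner s]
        _ = (H : ℝ)^2 * δ * ∑ s, β s * tvDist (π s) (πstar s) := by
            rw [Finset.mul_sum]
            exact Finset.sum_congr rfl fun s _ => by ring
        _ ≤ (H : ℝ)^2 * δ * εb := by
            refine mul_le_mul_of_nonneg_left hloss ?_
            positivity
        _ = δ * εb * (H : ℝ)^2 := by ring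
  linarith [e1, e2, b1, b2]
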